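/- Let T be an upper triangular N×N complex matrix whose diagonal entries all have nonnegative real part. For any unit vector z⁰ (in the sup norm) and t ≥ 0, the solution z(t) = e^{-tT} z⁰ satisfies |z_k(t)| ≤ C·(1 + t^{N-k} ‖T‖^{N-k}) for each component k, with C depending only on N. -/

import Mathlib

open scoped Matrix

attribute [local instance] Matrix.linftyOpNormedRing Matrix.linftyOpNormedAlgebra

open NormedSpace

noncomputable def mvCLM {N : ℕ} (z0 : Fin N → ℂ) (k : Fin N) :
    Matrix (Fin N) (Fin N) ℂ →L[ℝ] ℂ :=
  LinearMap.toContinuousLinearMap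
    { toFun := fun A => A.mulVec z0 k
      map_add' := fun A B => by simp [Matrix.add_mulVec]
      map_smul' := fun r A => by simp [Matrix.smul_mulVec] }

noncomputable def zf {N : ℕ} (T : Matrix (Fin N) (Fin N) ℂ) (z0 : Fin N → ℂ) (s : ℝ) :
    Fin N → ℂ := (exp ((-s) • T)).mulVec z0

noncomputable def Sf {N : ℕ} (T : Matrix (Fin N) (Fin N) ℂ) (z0 : Fin N → ℂ) (k : Fin N)
    (s : ℝ) : ℂ := ∑ j ∈ Finset.univ.filter (fun j => k < j), T k j * zf T z0 s j

lemma hasDerivAt_zf {N : ℕ} (T : Matrix (Fin N) (Fin N) ℂ) (z0 : Fin N → ℂ)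
    (k : Fin N) (s : ℝ) :
    HasDerivAt (fun u : ℝ => zf T z0 u k) (-(T.mulVec (zf T z0 s) k)) s := by
  unfold zf
  have h1 : HasDerivAt (fun u : ℝ => exp (u • T)) (T * exp ((-s) • T)) (-s) :=
    hasDerivAt_exp_smul_const' T (-s)
  have h2 : HasDerivAt (fun u : ℝ => -u) (-1 : ℝ) s := (hasDerivAt_neg s)
  have h3 : HasDerivAt (fun u : ℝ => exp ((-u) • T))
      ((-1 : ℝ) • (T * exp ((-s) • T))) s := h1.scomp s h2
  have h4 := ((mvCLM z0 k).hasFDerivAt.comp_hasDerivAt s h3)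
  have hE : (exp : Matrix (Fin N) (Fin N) ℂ → _) = (exp : Matrix (Fin N) (Fin N) ℂ → _) := rfl
  rw [hE] at h4
  convert h4 using 1
  show _ = mvCLM z0 k _
  simp [mvCLM, Matrix.mulVec_mulVec, Matrix.neg_mulVec]
  case e'_4 => rfl
  case e'_8 => rfl

lemma continuous_zf {N : ℕ} (T : Matrix (Fin N) (Fin N) ℂ) (z0 : Fin N → ℂ) (k : Fin N) :
    Continuous (fun s : ℝ => zf T z0 s k) :=
  continuous_iff_continuousAt.2 fun s => (hasDerivAt_zf T z0 k s).continuousAt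

lemma row_sum_le_norm {N : ℕ} (A : Matrix (Fin N) (Fin N) ℂ) (i : Fin N) :
    ∑ j, ‖A i j‖ ≤ ‖A‖ := by
  have h : (∑ j, ‖A i j‖₊) ≤ ‖A‖₊ := by
    rw [Matrix.linfty_opNNNorm_def]
    exact Finset.le_sup (f := fun i => ∑ j, ‖A i j‖₊) (Finset.mem_univ i)
  have := (NNReal.coe_le_coe).2 h
  simpa [NNReal.coe_sum, coe_nnnorm] using this

lemma duhamel {N : ℕ} (T : Matrix (Fin N) (Fin N) ℂ)
    (hT : ∀ i j : Fin N, j < i → T i j = 0)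
    (hdiag : ∀ i : Fin N, 0 ≤ (T i i).re)
    (z0 : Fin N → ℂ) (hz0 : ‖z0‖ = 1)
    (t : ℝ) (ht : 0 ≤ t) (k : Fin N) (B : ℝ → ℝ) (hBc : Continuous B)
    (hB0 : ∀ s ∈ Set.Icc (0:ℝ) t, 0 ≤ B s)
    (hB : ∀ s ∈ Set.Icc (0:ℝ) t, ∀ j, k < j → ‖zf T z0 s j‖ ≤ B s) :
    ‖zf T z0 t k‖ ≤ 1 + ‖T‖ * ∫ s in (0:ℝ)..t, B s := by
  set c : ℂ := T k k with hc
  -- splitting of the sum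
  have hsplit : ∀ s : ℝ, (T.mulVec (zf T z0 s)) k = c * zf T z0 s k + Sf T z0 k s := by
    intro s
    show ∑ j, T k j * zf T z0 s j = _
    rw [← Finset.sum_filter_add_sum_filter_not Finset.univ (fun j => k < j)
      (fun j => T k j * zf T z0 s j)]
    have h2 : ∑ j ∈ Finset.univ.filter (fun j => ¬ k < j), T k j * zf T z0 s j
        = c * zf T z0 s k := by
      rw [Finset.sum_eq_single_of_mem k]
      · simp [Finset.mem_filter]
      · intro j hj hjk
        have : j < k := lt_of_le_of_ne (not_lt.1 (Finset.mem_filter.1 hj).2) hjk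
        rw [hT k j this, zero_mul]
    rw [h2]
    unfold Sf
    ring
  have hSc : Continuous (Sf T z0 k) := by
    apply continuous_finset_sum
    exact fun j _ => continuous_const.mul (continuous_zf T z0 j)
  -- derivative of g
  have hg : ∀ s : ℝ, HasDerivAt (fun u : ℝ => Complex.exp ((u : ℂ) * c) * zf T z0 u k)
      (Complex.exp ((s : ℂ) * c) * (-Sf T z0 k s)) s := by
    intro s
    have h0 : HasDerivAt (fun u : ℝ => ((u : ℂ) * c)) c s := by
      simpa using (Complex.ofRealCLM.hasDerivAt (x := s)).mul_const c
    have he : HasDerivAt (fun u : ℝ => Complex.exp ((u : ℂ) * c))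
        (Complex.exp ((s : ℂ) * c) * c) s := h0.cexp
    have hzk := hasDerivAt_zf T z0 k s
    have hmul := he.mul hzk
    convert hmul using 1
    case e'_4 => rfl
    case e'_8 => rfl
    rw [hsplit s]
    ring
  have hg'c : Continuous (fun s : ℝ => Complex.exp ((s : ℂ) * c) * (-Sf T z0 k s)) :=
    (Complex.continuous_exp.comp (Complex.continuous_ofReal.mul continuous_const)).mul hSc.neg
  have hFTC : ∫ s in (0:ℝ)..t, Complex.exp ((s : ℂ) * c) * (-Sf T z0 k s)
      = Complex.exp ((t : ℂ) * c) * zf T z0 t k - Complex.exp ((0 : ℝ) * c) * zf T z0 0 k := by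
    exact intervalIntegral.integral_eq_sub_of_hasDerivAt (fun s _ => hg s)
      (hg'c.intervalIntegrable 0 t)
  have hg0 : Complex.exp (((0 : ℝ) : ℂ) * c) * zf T z0 0 k = z0 k := by
    simp [zf]
  -- bound on the integral of ‖g'‖
  have hIbound : (∫ s in (0:ℝ)..t, ‖Complex.exp ((s : ℂ) * c) * (-Sf T z0 k s)‖)
      ≤ Real.exp (t * c.re) * (‖T‖ * ∫ s in (0:ℝ)..t, B s) := by
    rw [← intervalIntegral.integral_const_mul, ← intervalIntegral.integral_const_mul]
    apply intervalIntegral.integral_mono_on ht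
      ((hg'c.norm).intervalIntegrable 0 t)
      ((continuous_const.mul (continuous_const.mul hBc)).intervalIntegrable 0 t)
    intro s hs
    have hnorm : ‖Complex.exp ((s : ℂ) * c) * (-Sf T z0 k s)‖
        = Real.exp (s * c.re) * ‖Sf T z0 k s‖ := by
      rw [norm_mul, norm_neg, Complex.norm_exp]
      norm_num
    rw [hnorm]
    have h1 : ‖Sf T z0 k s‖ ≤ ‖T‖ * B s := by
      calc ‖Sf T z0 k s‖ ≤ ∑ j ∈ Finset.univ.filter (fun j => k < j), ‖T k j * zf T z0 s j‖ :=
            norm_sum_le _ _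
        _ ≤ ∑ j ∈ Finset.univ.filter (fun j => k < j), ‖T k j‖ * B s := by
            apply Finset.sum_le_sum
            intro j hj
            rw [norm_mul]
            exact mul_le_mul_of_nonneg_left (hB s hs j (Finset.mem_filter.1 hj).2)
              (norm_nonneg _)
        _ = (∑ j ∈ Finset.univ.filter (fun j => k < j), ‖T k j‖) * B s := by
            rw [Finset.sum_mul]
        _ ≤ (∑ j, ‖T k j‖) * B s := by
            apply mul_le_mul_of_nonneg_right _ (hB0 s hs)
            exact Finset.sum_le_sum_of_subset_of_nonneg (Finset.filter_subset _ _)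
              (fun j _ _ => norm_nonneg _)
        _ ≤ ‖T‖ * B s := mul_le_mul_of_nonneg_right (row_sum_le_norm T k) (hB0 s hs)
    have h2 : Real.exp (s * c.re) ≤ Real.exp (t * c.re) :=
      Real.exp_le_exp.2 (mul_le_mul_of_nonneg_right hs.2 (hdiag k))
    exact mul_le_mul h2 h1 (norm_nonneg _) (Real.exp_nonneg _)
  -- bound on g t
  have hgt : ‖Complex.exp ((t : ℂ) * c) * zf T z0 t k‖
      ≤ 1 + Real.exp (t * c.re) * (‖T‖ * ∫ s in (0:ℝ)..t, B s) := by
    have heq : Complex.exp ((t : ℂ) * c) * zf T z0 t k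
        = z0 k + ∫ s in (0:ℝ)..t, Complex.exp ((s : ℂ) * c) * (-Sf T z0 k s) := by
      rw [hFTC, ← hg0]; push_cast; ring
    rw [heq]
    calc ‖z0 k + _‖ ≤ ‖z0 k‖ + ‖∫ s in (0:ℝ)..t, Complex.exp ((s : ℂ) * c) * (-Sf T z0 k s)‖ :=
          norm_add_le _ _
      _ ≤ ‖z0 k‖ + ∫ s in (0:ℝ)..t, ‖Complex.exp ((s : ℂ) * c) * (-Sf T z0 k s)‖ := by
          gcongr
          exact intervalIntegral.norm_integral_le_integral_norm ht
      _ ≤ 1 + Real.exp (t * c.re) * (‖T‖ * ∫ s in (0:ℝ)..t, B s) :=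
          add_le_add (le_trans (norm_le_pi_norm z0 k) (le_of_eq hz0)) hIbound
  -- conclude
  have hzk_eq : zf T z0 t k = Complex.exp (-((t : ℂ) * c)) *
      (Complex.exp ((t : ℂ) * c) * zf T z0 t k) := by
    rw [← mul_assoc, ← Complex.exp_add]
    simp
  have hnorm2 : ‖zf T z0 t k‖ = Real.exp (-(t * c.re)) *
      ‖Complex.exp ((t : ℂ) * c) * zf T z0 t k‖ := by
    rw [hzk_eq, norm_mul, Complex.norm_exp, ← hzk_eq]
    norm_num
  have hexp_le : Real.exp (-(t * c.re)) ≤ 1 :=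
    Real.exp_le_one_iff.2 (neg_nonpos.2 (mul_nonneg ht (hdiag k)))
  have hInonneg : 0 ≤ ∫ s in (0:ℝ)..t, B s :=
    intervalIntegral.integral_nonneg ht (fun s hs => hB0 s hs)
  rw [hnorm2]
  calc Real.exp (-(t * c.re)) * ‖Complex.exp ((t : ℂ) * c) * zf T z0 t k‖
      ≤ Real.exp (-(t * c.re)) * (1 + Real.exp (t * c.re) * (‖T‖ * ∫ s in (0:ℝ)..t, B s)) := by
        gcongr
    _ = Real.exp (-(t * c.re)) + (Real.exp (-(t * c.re)) * Real.exp (t * c.re)) *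
          (‖T‖ * ∫ s in (0:ℝ)..t, B s) := by ring
    _ = Real.exp (-(t * c.re)) + ‖T‖ * ∫ s in (0:ℝ)..t, B s := by
        rw [← Real.exp_add]; simp
    _ ≤ 1 + ‖T‖ * ∫ s in (0:ℝ)..t, B s := by gcongr

lemma aux_pow (a : ℝ) (ha : 0 ≤ a) (m : ℕ) : a ^ m ≤ 1 + a ^ (m + 1) := by
  rcases le_total a 1 with h | h
  · have h1 : a ^ m ≤ 1 := pow_le_one₀ ha h
    have h2 : (0:ℝ) ≤ a ^ (m+1) := pow_nonneg ha _
    linarith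
  · have h2 : a ^ m ≤ a ^ (m+1) := pow_le_pow_right₀ h (Nat.le_succ m)
    linarith

lemma aux_pow' (a : ℝ) (ha : 0 ≤ a) (m : ℕ) : a ≤ 1 + a ^ (m + 1) := by
  rcases le_total a 1 with h | h
  · have h2 : (0:ℝ) ≤ a ^ (m+1) := pow_nonneg ha _
    linarith
  · have h2 : a ^ 1 ≤ a ^ (m+1) := pow_le_pow_right₀ h (by omega)
    simpa using h2.trans (by linarith)

lemma Bcont (m : ℕ) (x : ℝ) : Continuous (fun s : ℝ => (3:ℝ)^m * (1 + s^m * x^m)) :=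
  continuous_const.mul (continuous_const.add ((continuous_pow m).mul continuous_const))

lemma Bnonneg (m : ℕ) (x s : ℝ) (hx : 0 ≤ x) (hs : 0 ≤ s) :
    (0:ℝ) ≤ (3:ℝ)^m * (1 + s^m * x^m) := by positivity

lemma Bint (m : ℕ) (x t : ℝ) : (∫ s in (0:ℝ)..t, (3:ℝ)^m * (1 + s^m * x^m))
    = 3^m * (t + t^(m+1)/(m+1) * x^m) := by
  rw [intervalIntegral.integral_const_mul]
  congr 1
  rw [intervalIntegral.integral_add intervalIntegrable_const
    ((by fun_prop : Continuous fun s : ℝ => s^m * x^m).intervalIntegrable 0 t),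
    intervalIntegral.integral_const, intervalIntegral.integral_mul_const, integral_pow]
  simp

lemma key_ineq (m : ℕ) (t x : ℝ) (ht : 0 ≤ t) (hx : 0 ≤ x) :
    1 + x * ((3:ℝ)^m * (t + t^(m+1)/(m+1) * x^m)) ≤ 3^(m+1) * (1 + t^(m+1) * x^(m+1)) := by
  have h1 : t*x ≤ 1 + t^(m+1)*x^(m+1) := by
    have := aux_pow' (t*x) (mul_nonneg ht hx) m
    rwa [mul_pow] at this
  have h2 : t^(m+1)/(m+1) * x^m ≤ t^(m+1) * x^m := by
    apply mul_le_mul_of_nonneg_right _ (pow_nonneg hx m)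
    apply div_le_self (pow_nonneg ht _)
    exact_mod_cast Nat.succ_le_succ (Nat.zero_le m)
  have h3 : (1:ℝ) ≤ 3^m := one_le_pow₀ (by norm_num)
  have h4 : x * (t^(m+1) * x^m) = t^(m+1) * x^(m+1) := by rw [pow_succ]; ring
  have h5 : (0:ℝ) ≤ t^(m+1) * x^(m+1) := by positivity
  have hp : (0:ℝ) < 3^m := by positivity
  have h6 : (3:ℝ)^(m+1) = 3 * 3^m := by rw [pow_succ]; ring
  nlinarith [mul_le_mul_of_nonneg_left h2 (mul_nonneg hx hp.le),
    mul_le_mul_of_nonneg_left h1 hp.le, mul_nonneg hp.le h5, h3, h6]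

lemma main_ind {N : ℕ} (m : ℕ) :
    ∀ T : Matrix (Fin N) (Fin N) ℂ,
      (∀ i j : Fin N, j < i → T i j = 0) →
      (∀ i : Fin N, 0 ≤ (T i i).re) →
      ∀ z0 : Fin N → ℂ, ‖z0‖ = 1 → ∀ t : ℝ, 0 ≤ t →
      ∀ k : Fin N, N - 1 - (k : ℕ) ≤ m →
        ‖zf T z0 t k‖ ≤ 3 ^ m * (1 + t ^ m * ‖T‖ ^ m) := by
  induction m with
  | zero =>
    intro T hT hdiag z0 hz0 t ht k hk
    have hvac : ∀ s ∈ Set.Icc (0:ℝ) t, ∀ j, k < j → ‖zf T z0 s j‖ ≤ (0:ℝ) := by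
      intro s hs j hj
      exfalso
      have h1 : (k : ℕ) < (j : ℕ) := hj
      have h2 : (j : ℕ) < N := j.isLt
      omega
    have hb := duhamel T hT hdiag z0 hz0 t ht k (fun _ => 0) continuous_const
      (fun s _ => le_refl 0) hvac
    simp only [intervalIntegral.integral_zero, mul_zero, add_zero] at hb
    calc ‖zf T z0 t k‖ ≤ 1 := hb
      _ ≤ 3 ^ 0 * (1 + t ^ 0 * ‖T‖ ^ 0) := by norm_num
  | succ m ih =>
    intro T hT hdiag z0 hz0 t ht k hk
    by_cases hkm : N - 1 - (k : ℕ) ≤ m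
    · have h := ih T hT hdiag z0 hz0 t ht k hkm
      refine h.trans ?_
      have hx : (0:ℝ) ≤ ‖T‖ := norm_nonneg T
      have ha : t^m * ‖T‖^m ≤ 1 + t^(m+1) * ‖T‖^(m+1) := by
        have := aux_pow (t*‖T‖) (mul_nonneg ht hx) m
        rwa [mul_pow, mul_pow] at this
      have hp : (0:ℝ) < 3^m := by positivity
      have h5 : (0:ℝ) ≤ t^(m+1) * ‖T‖^(m+1) :=
        mul_nonneg (pow_nonneg ht _) (pow_nonneg hx _)
      rw [pow_succ]
      nlinarith [mul_le_mul_of_nonneg_left ha hp.le]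
    · have hB : ∀ s ∈ Set.Icc (0:ℝ) t, ∀ j, k < j →
          ‖zf T z0 s j‖ ≤ (3:ℝ)^m * (1 + s^m * ‖T‖^m) := by
        intro s hs j hj
        apply ih T hT hdiag z0 hz0 s hs.1 j
        have h1 : (k : ℕ) < (j : ℕ) := hj
        have h2 : (j : ℕ) < N := j.isLt
        omega
      have hBc : Continuous (fun s : ℝ => (3:ℝ)^m * (1 + s^m * ‖T‖^m)) :=
        Bcont m ‖T‖
      have hB0 : ∀ s ∈ Set.Icc (0:ℝ) t, (0:ℝ) ≤ (3:ℝ)^m * (1 + s^m * ‖T‖^m) :=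
        fun s hs => Bnonneg m ‖T‖ s (norm_nonneg T) hs.1
      have hb := duhamel T hT hdiag z0 hz0 t ht k _ hBc hB0 hB
      have hint : (∫ s in (0:ℝ)..t, (3:ℝ)^m * (1 + s^m * ‖T‖^m))
          = 3^m * (t + t^(m+1)/(m+1) * ‖T‖^m) := Bint m ‖T‖ t
      rw [hint] at hb
      refine hb.trans ?_
      exact key_ineq m t ‖T‖ ht (norm_nonneg T)

/-- Let `T` be upper triangular with diagonal entries of nonnegative real
part. For any sup-norm unit vector `z⁰` and `t ≥ 0`, the components of
`z(t) = e^{-tT} z⁰` satisfy `|z_k(t)| ≤ C (1 + t^{N-k} ‖T‖^{N-k})` (here `k : Fin N`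
corresponds to the `(k+1)`-th component, so the exponent is `N - 1 - k`), with `C`
depending only on `N`. -/
theorem exp_neg_triangular_component_bound (N : ℕ) :
    ∃ C : ℝ, 0 < C ∧
      ∀ T : Matrix (Fin N) (Fin N) ℂ,
        (∀ i j : Fin N, j < i → T i j = 0) →
        (∀ i : Fin N, 0 ≤ (T i i).re) →
          ∀ z0 : Fin N → ℂ, ‖z0‖ = 1 →
            ∀ t : ℝ, 0 ≤ t →
              ∀ k : Fin N,
                ‖(NormedSpace.exp ((-t) • T)).mulVec z0 k‖ ≤
                  C * (1 + t ^ (N - 1 - (k : ℕ)) * ‖T‖ ^ (N - 1 - (k : ℕ))) := by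
  refine ⟨3 ^ (N - 1), by positivity, ?_⟩
  intro T hT hdiag z0 hz0 t ht k
  have hzf : (NormedSpace.exp ((-t) • T)).mulVec z0 k = zf T z0 t k := rfl
  rw [hzf]
  have h := main_ind (N - 1 - (k : ℕ)) T hT hdiag z0 hz0 t ht k le_rfl
  refine le_trans h ?_
  apply mul_le_mul_of_nonneg_right
  · exact pow_le_pow_right₀ (by norm_num) (by omega)
  · have hx : (0:ℝ) ≤ ‖T‖ := norm_nonneg T
    positivity
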